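/- arXiv:1408.0420 — 5 statements merged into one kernel-verified Lean document; each statement's English description precedes it below -/
import Mathlib

section
/- Let p be a prime and let h_1, h_2, q be integers with 1 ≤ h_1 ≤ h_2, h_1 + h_2 ≤ p, and 0 ≤ q < h_1 (so the two intervals overlap). Then Σ_{m=1}^{p} F_p(m, h_1) · F_p(m + q, h_2) = h_1 - q + h_1 h_2 (p - 2). -/
/-- `F n m h` is the number of integers `r` with `m ≤ r ≤ m + h - 1` coprime to `n`. -/
noncomputable def F (n : ℕ) (m : ℤ) (h : ℕ) : ℕ :=
  ((Finset.Ico m (m + (h : ℤ))).filter (fun r => Int.gcd r n = 1)).card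

lemma gcd1 (p : ℕ) (hp : p.Prime) (r : ℤ) : Int.gcd r p = 1 ↔ ¬ (p:ℤ) ∣ r := by
  have hpi : Prime (p:ℤ) := Nat.prime_iff_prime_int.mp hp
  rw [← Int.isCoprime_iff_gcd_eq_one, isCoprime_comm]
  exact Prime.coprime_iff_not_dvd hpi

lemma filter_dvd_eq (p : ℕ) (hp : p.Prime) (a : ℤ) (h : ℕ) (ha : 1 ≤ a)
    (hh : a + h ≤ 2 * p) :
    (Finset.Ico a (a + (h:ℤ))).filter (fun r => (p:ℤ) ∣ r) =
      if a ≤ (p:ℤ) ∧ (p:ℤ) < a + h then {(p:ℤ)} else ∅ := by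
  have hp1 : (1:ℤ) ≤ p := by exact_mod_cast hp.pos
  ext r
  simp only [Finset.mem_filter, Finset.mem_Ico]
  split_ifs with hc
  · simp only [Finset.mem_singleton]
    constructor
    · rintro ⟨⟨h1, h2⟩, k, rfl⟩
      have hk1 : 1 ≤ k := by nlinarith
      have hk2 : k < 2 := by nlinarith
      have : k = 1 := by omega
      rw [this, mul_one]
    · rintro rfl
      exact ⟨⟨hc.1, hc.2⟩, dvd_refl _⟩
  · simp only [Finset.notMem_empty, iff_false]
    rintro ⟨⟨h1, h2⟩, k, rfl⟩
    have hk1 : 1 ≤ k := by nlinarith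
    have hk2 : k < 2 := by nlinarith
    have : k = 1 := by omega
    rw [this, mul_one] at h1 h2
    exact hc ⟨h1, h2⟩

lemma F_eq (p : ℕ) (hp : p.Prime) (a : ℤ) (h : ℕ) (ha : 1 ≤ a)
    (hh : a + h ≤ 2 * p) :
    (F p a h : ℤ) = h - (if a ≤ (p:ℤ) ∧ (p:ℤ) < a + h then 1 else 0) := by
  unfold F
  rw [Finset.filter_congr (fun r _ => by
    simpa using (gcd1 p hp r))]
  rw [Finset.filter_not, Finset.card_sdiff_of_subset (Finset.filter_subset _ _),
    filter_dvd_eq p hp a h ha hh, Int.card_Ico]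
  split_ifs with hc
  · have : 1 ≤ h := by omega
    simp only [Finset.card_singleton]
    omega
  · simp only [Finset.card_empty]
    omega

/-- For a prime `p` and integers `1 ≤ h₁ ≤ h₂`, `h₁ + h₂ ≤ p`,
`0 ≤ q < h₁` (two overlapping intervals),
`∑_{m=1}^p F_p(m,h₁) F_p(m+q,h₂) = h₁ - q + h₁ h₂ (p - 2)`. -/
theorem sum_F_mul_F_overlap (p : ℕ) (hp : p.Prime) (h₁ h₂ q : ℕ)
    (hh₁ : 1 ≤ h₁) (hh : h₁ ≤ h₂) (hsum : h₁ + h₂ ≤ p) (hq : q < h₁) :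
    ∑ m ∈ Finset.Icc (1 : ℤ) (p : ℤ), F p m h₁ * F p (m + (q : ℤ)) h₂ =
      h₁ - q + h₁ * h₂ * (p - 2) := by
  have hp2 : 2 ≤ p := hp.two_le
  have hpz : (2:ℤ) ≤ p := by exact_mod_cast hp2
  have hsz : (h₁:ℤ) + h₂ ≤ p := by exact_mod_cast hsum
  have hqz : (q:ℤ) < h₁ := by exact_mod_cast hq
  have hhz : (h₁:ℤ) ≤ h₂ := by exact_mod_cast hh
  have hh₁z : (1:ℤ) ≤ h₁ := by exact_mod_cast hh₁
  zify [hq.le, hp2]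
  have key : ∀ m ∈ Finset.Icc (1:ℤ) (p:ℤ),
      ((F p m h₁ : ℤ) * (F p (m + (q:ℤ)) h₂ : ℤ)) =
      (h₁:ℤ) * h₂
        - h₂ * (if m ≤ (p:ℤ) ∧ (p:ℤ) < m + h₁ then 1 else 0)
        - h₁ * (if m + q ≤ (p:ℤ) ∧ (p:ℤ) < m + q + h₂ then 1 else 0)
        + (if (m ≤ (p:ℤ) ∧ (p:ℤ) < m + h₁) ∧ (m + q ≤ (p:ℤ) ∧ (p:ℤ) < m + q + h₂) then 1 else 0) := by
    intro m hm
    rw [Finset.mem_Icc] at hm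
    rw [F_eq p hp m h₁ hm.1 (by omega),
        F_eq p hp (m + q) h₂ (by omega) (by omega)]
    by_cases c1 : m ≤ (p:ℤ) ∧ (p:ℤ) < m + h₁ <;>
      by_cases c2 : m + q ≤ (p:ℤ) ∧ (p:ℤ) < m + q + h₂ <;>
      simp [c1, c2] <;> ring
  rw [Finset.sum_congr rfl key]
  simp only [Finset.sum_add_distrib, Finset.sum_sub_distrib, ← Finset.mul_sum,
    Finset.sum_const, Finset.sum_boole]
  have card1 : (Finset.Icc (1:ℤ) (p:ℤ)).card = p := by
    rw [Int.card_Icc]; omega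
  have e1 : (Finset.Icc (1:ℤ) (p:ℤ)).filter (fun m => m ≤ (p:ℤ) ∧ (p:ℤ) < m + h₁)
      = Finset.Icc ((p:ℤ) - h₁ + 1) (p:ℤ) := by
    ext m; simp only [Finset.mem_filter, Finset.mem_Icc]; omega
  have e2 : (Finset.Icc (1:ℤ) (p:ℤ)).filter (fun m => m + q ≤ (p:ℤ) ∧ (p:ℤ) < m + q + h₂)
      = Finset.Icc ((p:ℤ) - q - h₂ + 1) ((p:ℤ) - q) := by
    ext m; simp only [Finset.mem_filter, Finset.mem_Icc]; omega
  have e3 : (Finset.Icc (1:ℤ) (p:ℤ)).filter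
      (fun m => (m ≤ (p:ℤ) ∧ (p:ℤ) < m + h₁) ∧ (m + q ≤ (p:ℤ) ∧ (p:ℤ) < m + q + h₂))
      = Finset.Icc ((p:ℤ) - h₁ + 1) ((p:ℤ) - q) := by
    ext m; simp only [Finset.mem_filter, Finset.mem_Icc]; omega
  rw [e1, e2, e3, card1, Int.card_Icc, Int.card_Icc, Int.card_Icc]
  have t1 : ((p:ℤ) + 1 - ((p:ℤ) - h₁ + 1)).toNat = h₁ := by omega
  have t2 : ((p:ℤ) - q + 1 - ((p:ℤ) - q - h₂ + 1)).toNat = h₂ := by omega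
  have t3 : ((p:ℤ) - q + 1 - ((p:ℤ) - h₁ + 1)).toNat = h₁ - q := by omega
  rw [t1, t2, t3]
  push_cast [hq.le, nsmul_eq_mul]
  ring
end

section
/- Let p be a prime and let h_1, h_2, q be integers with 1 ≤ h_1 ≤ h_2, h_1 + h_2 ≤ p, and h_1 ≤ q ≤ p - h_2. Then the covariance of the coprime counts of the two (disjoint) intervals is negative and equals G(p, p, h_1, h_2, q) = -h_1 h_2 / p^2. -/
/-- The covariance of the coprime counts of two intervals of lengths `h₁`, `h₂`
separated by distance `q`. -/
noncomputable def G (n₁ n₂ : ℕ) (h₁ h₂ : ℕ) (q : ℤ) : ℝ :=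
  (1 / ((n₁ : ℝ) * n₂)) *
    ∑ m ∈ Finset.Icc (1 : ℤ) ((n₁ : ℤ) * n₂),
      ((F n₁ m h₁ : ℝ) - (h₁ : ℝ) * (Nat.totient n₁) / n₁) *
        ((F n₂ (m + q) h₂ : ℝ) - (h₂ : ℝ) * (Nat.totient n₂) / n₂)

open Finset

/-- `D p h m` is the number of multiples of `p` in `[m, m+h)`. -/
noncomputable def D (p h : ℕ) (m : ℤ) : ℕ :=
  ((Finset.Ico m (m + (h : ℤ))).filter (fun r => (p : ℤ) ∣ r)).card

lemma count_mul {p : ℕ} (hp : 0 < p) (a : ℤ) (k : ℕ) :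
    ((Finset.Ico a (a + (p : ℤ) * k)).filter (fun m => (p : ℤ) ∣ m)).card = k := by
  have hp' : (0 : ℤ) < p := by exact_mod_cast hp
  set c : ℤ := -((-a) / p) with hc
  have key : ∀ t : ℤ, (a ≤ p * t ↔ c ≤ t) := by
    intro t
    rw [hc, neg_le, Int.le_ediv_iff_mul_le hp']
    constructor <;> intro h <;> nlinarith
  have key2 : ∀ t : ℤ, (a + (p : ℤ) * k ≤ p * t ↔ c + k ≤ t) := by
    intro t
    have h1 := key (t - k)
    rw [mul_sub] at h1
    constructor <;> intro h
    · linarith [h1.mp (by linarith)]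
    · linarith [h1.mpr (by linarith)]
  have himg : (Finset.Ico a (a + (p : ℤ) * k)).filter (fun m => (p : ℤ) ∣ m)
      = (Finset.Ico c (c + k)).image (fun t => (p : ℤ) * t) := by
    ext m
    simp only [Finset.mem_filter, Finset.mem_Ico, Finset.mem_image]
    constructor
    · rintro ⟨⟨ha, hb⟩, hd⟩
      obtain ⟨t, rfl⟩ := hd
      refine ⟨t, ⟨(key t).mp ha, ?_⟩, rfl⟩
      by_contra hcon
      push_neg at hcon
      exact absurd ((key2 t).mpr hcon) (not_le.mpr hb)
    · rintro ⟨t, ⟨h1, h2⟩, rfl⟩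
      refine ⟨⟨(key t).mpr h1, ?_⟩, ⟨t, rfl⟩⟩
      by_contra hcon
      push_neg at hcon
      exact absurd ((key2 t).mp hcon) (by omega)
  rw [himg, Finset.card_image_of_injective _ (mul_right_injective₀ (ne_of_gt hp')),
    Int.card_Ico]
  simp

lemma sum_indicator {p : ℕ} (hp : 0 < p) (j : ℤ) :
    ∑ m ∈ Finset.Icc (1 : ℤ) ((p : ℤ) * p),
      (if (p : ℤ) ∣ (m + j) then (1 : ℝ) else 0) = p := by
  rw [Finset.sum_boole]
  have h0 : Finset.Ico ((j : ℤ) + 1) (j + 1 + (p : ℤ) * p)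
      = (Finset.Ico (1 : ℤ) (1 + (p : ℤ) * p)).map (addLeftEmbedding j) := by
    rw [Finset.map_add_left_Ico]
    congr 1
    ring
  have hmap : (Finset.Ico ((j : ℤ) + 1) (j + 1 + (p : ℤ) * p)).filter (fun m => (p : ℤ) ∣ m)
      = ((Finset.Ico (1 : ℤ) (1 + (p : ℤ) * p)).filter
          (fun m => (p : ℤ) ∣ (j + m))).map (addLeftEmbedding j) := by
    rw [h0, Finset.filter_map]
    rfl
  have hcount : ((Finset.Ico ((j : ℤ) + 1) ((j + 1) + (p : ℤ) * p)).filter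
      (fun m => (p : ℤ) ∣ m)).card = p := count_mul hp _ p
  rw [show ((j : ℤ) + 1) + (p : ℤ) * p = j + 1 + (p : ℤ) * p from rfl] at hcount
  rw [hmap, Finset.card_map] at hcount
  have hIcc : Finset.Icc (1 : ℤ) ((p : ℤ) * p) = Finset.Ico (1 : ℤ) (1 + (p : ℤ) * p) := by
    ext x
    rw [Finset.mem_Icc, Finset.mem_Ico, add_comm (1 : ℤ), Int.lt_add_one_iff]
  have hcomm : (Finset.Ico (1 : ℤ) (1 + (p : ℤ) * p)).filter (fun m => (p : ℤ) ∣ (m + j))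
      = (Finset.Ico (1 : ℤ) (1 + (p : ℤ) * p)).filter (fun m => (p : ℤ) ∣ (j + m)) := by
    apply Finset.filter_congr
    intro m _
    rw [add_comm m j]
  rw [hIcc, hcomm, hcount]

lemma D_as_sum (p h : ℕ) (m : ℤ) :
    (D p h m : ℝ) = ∑ j ∈ Finset.range h, (if (p : ℤ) ∣ (m + j) then (1 : ℝ) else 0) := by
  have hmap : Finset.Ico m (m + (h : ℤ))
      = (Finset.range h).map ⟨fun j : ℕ => m + (j : ℤ), fun a b hab => by simpa using hab⟩ := by
    ext x
    simp only [Finset.mem_Ico, Finset.mem_map, Finset.mem_range, Function.Embedding.coeFn_mk]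
    constructor
    · rintro ⟨ha, hb⟩
      exact ⟨(x - m).toNat, by omega, by show m + ((x - m).toNat : ℤ) = x; omega⟩
    · rintro ⟨j, hj, rfl⟩
      show m ≤ m + (j : ℤ) ∧ m + (j : ℤ) < m + h
      omega
  rw [D, ← Finset.sum_boole, hmap, Finset.sum_map]
  rfl

lemma sum_D {p : ℕ} (hp : 0 < p) (h : ℕ) (c : ℤ) :
    ∑ m ∈ Finset.Icc (1 : ℤ) ((p : ℤ) * p), (D p h (m + c) : ℝ) = h * p := by
  have h1 : ∑ m ∈ Finset.Icc (1 : ℤ) ((p : ℤ) * p), (D p h (m + c) : ℝ)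
      = ∑ m ∈ Finset.Icc (1 : ℤ) ((p : ℤ) * p), ∑ j ∈ Finset.range h,
          (if (p : ℤ) ∣ (m + (c + j)) then (1 : ℝ) else 0) :=
    Finset.sum_congr rfl (fun m _ => by
      rw [D_as_sum]
      exact Finset.sum_congr rfl (fun j _ => by rw [add_assoc]))
  rw [h1, Finset.sum_comm]
  have h2 : ∑ j ∈ Finset.range h, ∑ m ∈ Finset.Icc (1 : ℤ) ((p : ℤ) * p),
      (if (p : ℤ) ∣ (m + (c + j)) then (1 : ℝ) else 0) = ∑ j ∈ Finset.range h, (p : ℝ) :=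
    Finset.sum_congr rfl (fun j _ => sum_indicator hp (c + j))
  rw [h2, Finset.sum_const, Finset.card_range, nsmul_eq_mul]

lemma F_eq_sub (p : ℕ) (hp : p.Prime) (h : ℕ) (m : ℤ) :
    (F p m h : ℝ) = h - D p h m := by
  have key : F p m h + D p h m = h := by
    have hfil : (Finset.Ico m (m + (h : ℤ))).filter (fun r => ¬ Int.gcd r p = 1)
        = (Finset.Ico m (m + (h : ℤ))).filter (fun r => (p : ℤ) ∣ r) := by
      apply Finset.filter_congr
      intro r _
      constructor
      · intro hne
        by_contra hd
        apply hne
        have h1 : ¬ p ∣ r.natAbs := by rwa [← Int.natCast_dvd]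
        have h2 := (hp.coprime_iff_not_dvd).mpr h1
        rw [Int.gcd]
        simpa [Nat.coprime_comm] using h2.symm
      · intro hd hgcd
        have h1 : p ∣ r.natAbs := Int.natCast_dvd.mp hd
        have hc : Nat.Coprime p r.natAbs := by
          rw [Int.gcd] at hgcd
          simpa [Nat.Coprime, Nat.gcd_comm] using hgcd
        exact (hp.coprime_iff_not_dvd).mp hc h1
    have hcc := Finset.card_filter_add_card_filter_not
      (s := Finset.Ico m (m + (h : ℤ))) (fun r => Int.gcd r p = 1)
    rw [hfil] at hcc
    rw [F, D, hcc, Int.card_Ico]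
    simp
  have hkey := congrArg (fun n : ℕ => (n : ℝ)) key
  push_cast at hkey
  linarith

lemma cross_zero (p h₁ h₂ q : ℕ) (hh₁ : 1 ≤ h₁) (hq₁ : h₁ ≤ q) (hqh : q + h₂ ≤ p)
    (m : ℤ) : (D p h₁ m : ℝ) * (D p h₂ (m + q) : ℝ) = 0 := by
  rcases Nat.eq_zero_or_pos (D p h₁ m) with h | h
  · rw [h]; simp
  rcases Nat.eq_zero_or_pos (D p h₂ (m + q)) with h' | h'
  · rw [h']; simp
  exfalso
  rw [D] at h
  rw [D] at h'
  obtain ⟨r₁, hr₁⟩ := Finset.card_pos.mp h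
  obtain ⟨r₂, hr₂⟩ := Finset.card_pos.mp h'
  simp only [Finset.mem_filter, Finset.mem_Ico] at hr₁ hr₂
  obtain ⟨⟨ha₁, hb₁⟩, hd₁⟩ := hr₁
  obtain ⟨⟨ha₂, hb₂⟩, hd₂⟩ := hr₂
  have hdvd : (p : ℤ) ∣ (r₂ - r₁) := dvd_sub hd₂ hd₁
  have hzero : r₂ - r₁ = 0 := by
    apply Int.eq_zero_of_abs_lt_dvd hdvd
    rw [abs_of_pos (by omega)]
    omega
  omega

/-- For a prime `p` and integers `1 ≤ h₁ ≤ h₂`, `h₁ + h₂ ≤ p`,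
`h₁ ≤ q ≤ p - h₂` (two disjoint intervals), the covariance is negative and equals
`G(p,p,h₁,h₂,q) = -h₁h₂/p²`. -/
theorem G_disjoint_neg (p : ℕ) (hp : p.Prime) (h₁ h₂ q : ℕ)
    (hh₁ : 1 ≤ h₁) (hh : h₁ ≤ h₂) (hsum : h₁ + h₂ ≤ p)
    (hq₁ : h₁ ≤ q) (hq₂ : q ≤ p - h₂) :
    G p p h₁ h₂ (q : ℤ) < 0 ∧
      G p p h₁ h₂ (q : ℤ) = -((h₁ : ℝ) * h₂) / (p : ℝ) ^ 2 := by
  have hp0 : 0 < p := hp.pos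
  have hP0 : (0 : ℝ) < p := by exact_mod_cast hp0
  have hPne : (p : ℝ) ≠ 0 := ne_of_gt hP0
  have hφ : ((Nat.totient p : ℝ)) = (p : ℝ) - 1 := by
    rw [Nat.totient_prime hp]
    push_cast [Nat.cast_sub hp.one_lt.le]
    ring
  have hqh : q + h₂ ≤ p := by omega
  have hsummand : ∀ m : ℤ,
      ((F p m h₁ : ℝ) - (h₁ : ℝ) * (Nat.totient p) / p) *
        ((F p (m + q) h₂ : ℝ) - (h₂ : ℝ) * (Nat.totient p) / p)
      = ((h₁ : ℝ) / p - (D p h₁ m : ℝ)) * ((h₂ : ℝ) / p - (D p h₂ (m + q) : ℝ)) := by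
    intro m
    rw [F_eq_sub p hp h₁ m, F_eq_sub p hp h₂ (m + q), hφ]
    field_simp
    ring
  have hS : ∑ m ∈ Finset.Icc (1 : ℤ) ((p : ℤ) * p),
      ((F p m h₁ : ℝ) - (h₁ : ℝ) * (Nat.totient p) / p) *
        ((F p (m + q) h₂ : ℝ) - (h₂ : ℝ) * (Nat.totient p) / p) = -((h₁ : ℝ) * h₂) := by
    rw [Finset.sum_congr rfl (fun m _ => hsummand m)]
    have hcard : (Finset.Icc (1 : ℤ) ((p : ℤ) * p)).card = p * p := by
      rw [Int.card_Icc]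
      have h5 : ((p : ℤ) * p + 1 - 1) = ((p * p : ℕ) : ℤ) := by push_cast; ring
      rw [h5, Int.toNat_natCast]
    have hx : ∑ m ∈ Finset.Icc (1 : ℤ) ((p : ℤ) * p), (D p h₁ m : ℝ) = h₁ * p := by
      have h6 := sum_D hp0 h₁ 0
      simpa using h6
    have hy : ∑ m ∈ Finset.Icc (1 : ℤ) ((p : ℤ) * p), (D p h₂ (m + q) : ℝ) = h₂ * p :=
      sum_D hp0 h₂ q
    have hcross : ∑ m ∈ Finset.Icc (1 : ℤ) ((p : ℤ) * p),
        (D p h₁ m : ℝ) * (D p h₂ (m + q) : ℝ) = 0 :=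
      Finset.sum_eq_zero (fun m _ => cross_zero p h₁ h₂ q hh₁ hq₁ hqh m)
    have e1 : ∑ m ∈ Finset.Icc (1 : ℤ) ((p : ℤ) * p),
        ((h₁ : ℝ) / p - (D p h₁ m : ℝ)) * ((h₂ : ℝ) / p - (D p h₂ (m + q) : ℝ))
        = (∑ m ∈ Finset.Icc (1 : ℤ) ((p : ℤ) * p), (h₁ : ℝ) / p * ((h₂ : ℝ) / p))
            - (h₁ : ℝ) / p * ∑ m ∈ Finset.Icc (1 : ℤ) ((p : ℤ) * p), (D p h₂ (m + q) : ℝ)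
            - (h₂ : ℝ) / p * ∑ m ∈ Finset.Icc (1 : ℤ) ((p : ℤ) * p), (D p h₁ m : ℝ)
            + ∑ m ∈ Finset.Icc (1 : ℤ) ((p : ℤ) * p),
                (D p h₁ m : ℝ) * (D p h₂ (m + q) : ℝ) := by
      rw [Finset.mul_sum, Finset.mul_sum, ← Finset.sum_sub_distrib,
        ← Finset.sum_sub_distrib, ← Finset.sum_add_distrib]
      exact Finset.sum_congr rfl (fun m _ => by ring)
    rw [e1, hx, hy, hcross, Finset.sum_const, hcard, nsmul_eq_mul]
    push_cast
    field_simp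
    ring
  have hG : G p p h₁ h₂ (q : ℤ) = -((h₁ : ℝ) * h₂) / (p : ℝ) ^ 2 := by
    rw [G, hS, pow_two]
    ring
  refine ⟨?_, hG⟩
  rw [hG]
  apply div_neg_of_neg_of_pos
  · have hx1 : (0 : ℝ) < (h₁ : ℝ) := by exact_mod_cast hh₁
    have hx2 : (0 : ℝ) < (h₂ : ℝ) := by exact_mod_cast hh₁.trans hh
    nlinarith
  · positivity
end

section
/- Fix i ≥ 1, interval lengths h_1, h_2 ≥ 0, and a shift q ≥ 0. Then the covariance between the count of coprimes to p_i# and the count of coprimes to p_j# tends to zero as j → ∞: lim_{j→∞} G(p_i#, p_j#, h_1, h_2, q) = 0. -/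
open Filter Finset

lemma gcd_emod_left' (m : ℤ) (n : ℕ) : Int.gcd (m % (n : ℤ)) n = Int.gcd m n := by
  apply Nat.dvd_antisymm
  · rw [← Int.natCast_dvd_natCast]
    apply Int.dvd_coe_gcd _ (Int.gcd_dvd_right _ _)
    have hm : m = m % n + (n : ℤ) * (m / n) := by rw [Int.emod_def]; ring
    nth_rewrite 2 [hm]
    exact dvd_add (Int.gcd_dvd_left _ _) (Dvd.dvd.mul_right (Int.gcd_dvd_right _ _) _)
  · rw [← Int.natCast_dvd_natCast]
    apply Int.dvd_coe_gcd _ (Int.gcd_dvd_right _ _)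
    rw [Int.emod_def]
    exact dvd_sub (Int.gcd_dvd_left _ _) (Dvd.dvd.mul_right (Int.gcd_dvd_right _ _) _)

/-- Any interval of length `n` contains exactly `φ n` integers coprime to `n`. -/
lemma card_coprime_Ico (n : ℕ) (s : ℤ) :
    ((Finset.Ico s (s + (n : ℤ))).filter (fun r => Int.gcd r n = 1)).card = Nat.totient n := by
  rcases Nat.eq_zero_or_pos n with h0 | hn
  · subst h0; simp
  have hnz : (0 : ℤ) < (n : ℤ) := by exact_mod_cast hn
  have key : ∀ x : ℤ, (s + (x - s) % n) % n = x % n := by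
    intro x
    conv_rhs => rw [show x = s + (x - s) by ring]
    rw [Int.add_emod, Int.emod_emod_of_dvd _ dvd_rfl, ← Int.add_emod]
  have stepA : ((Finset.Ico s (s + (n : ℤ))).filter (fun r => Int.gcd r n = 1)).card
      = ((Finset.Ico (0 : ℤ) (n : ℤ)).filter (fun r => Int.gcd r n = 1)).card := by
    apply Finset.card_nbij' (fun m => m % (n : ℤ)) (fun b => s + (b - s) % (n : ℤ))
    · intro a ha
      simp only [Finset.mem_coe, Finset.mem_filter, Finset.mem_Ico] at ha ⊢
      refine ⟨⟨Int.emod_nonneg _ hnz.ne', Int.emod_lt_of_pos _ hnz⟩, ?_⟩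
      rw [gcd_emod_left']; exact ha.2
    · intro b hb
      simp only [Finset.mem_coe, Finset.mem_filter, Finset.mem_Ico] at hb ⊢
      have h1 : (0 : ℤ) ≤ (b - s) % n := Int.emod_nonneg _ hnz.ne'
      have h2 : (b - s) % n < n := Int.emod_lt_of_pos _ hnz
      refine ⟨⟨by linarith, by linarith⟩, ?_⟩
      rw [← gcd_emod_left', key b, Int.emod_eq_of_lt hb.1.1 hb.1.2]
      exact hb.2
    · intro a ha
      simp only [Finset.mem_coe, Finset.mem_filter, Finset.mem_Ico] at ha
      have : (a % n - s) % n = (a - s) % n := by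
        rw [Int.sub_emod, Int.emod_emod_of_dvd _ dvd_rfl, ← Int.sub_emod]
      dsimp only
      rw [this, Int.emod_eq_of_lt (by linarith [ha.1.1]) (by linarith [ha.1.2])]
      ring
    · intro b hb
      simp only [Finset.mem_coe, Finset.mem_filter, Finset.mem_Ico] at hb
      dsimp only
      rw [key b, Int.emod_eq_of_lt hb.1.1 hb.1.2]
  rw [stepA]
  rw [Nat.totient_eq_card_coprime]
  apply Finset.card_nbij' (fun m : ℤ => m.toNat) (fun k : ℕ => (k : ℤ))
  · intro a ha
    simp only [Finset.mem_coe, Finset.mem_filter, Finset.mem_Ico, Finset.mem_range] at ha ⊢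
    obtain ⟨⟨h0, h1⟩, h2⟩ := ha
    constructor
    · omega
    · rw [Nat.Coprime, Nat.gcd_comm]
      have : ((a.toNat : ℤ)).gcd n = 1 := by rw [Int.toNat_of_nonneg h0]; exact h2
      rwa [Int.gcd_natCast_natCast] at this
  · intro k hk
    simp only [Finset.mem_coe, Finset.mem_filter, Finset.mem_Ico, Finset.mem_range] at hk ⊢
    refine ⟨⟨by positivity, by exact_mod_cast hk.1⟩, ?_⟩
    rw [Int.gcd_natCast_natCast, Nat.gcd_comm]
    exact hk.2
  · intro a ha
    simp only [Finset.mem_coe, Finset.mem_filter, Finset.mem_Ico] at ha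
    exact Int.toNat_of_nonneg ha.1.1
  · intro k _
    exact Int.toNat_natCast k

lemma card_coprime_Ico_mul (n k : ℕ) (s : ℤ) :
    ((Finset.Ico s (s + (k : ℤ) * n)).filter (fun r => Int.gcd r n = 1)).card
      = k * Nat.totient n := by
  induction k generalizing s with
  | zero => simp
  | succ k ih =>
    have hkn : (0:ℤ) ≤ (k : ℤ) * n := by positivity
    have h1 : s ≤ s + (k : ℤ) * n := by linarith
    have h2 : s + (k : ℤ) * n ≤ s + ((k : ℤ) + 1) * n := by nlinarith [Nat.cast_nonneg (α := ℤ) n]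
    have hsplit : Finset.Ico s (s + ((k : ℕ) + 1 : ℤ) * n)
        = Finset.Ico s (s + (k : ℤ) * n) ∪ Finset.Ico (s + (k : ℤ) * n) (s + ((k : ℤ) + 1) * n) := by
      rw [Finset.Ico_union_Ico_eq_Ico h1 h2]
    push_cast
    rw [hsplit, Finset.filter_union, Finset.card_union_of_disjoint
      (Finset.disjoint_filter_filter (Finset.Ico_disjoint_Ico_consecutive _ _ _))]
    have := card_coprime_Ico n (s + (k : ℤ) * n)
    rw [ih s, show s + ((k : ℤ) + 1) * n = s + (k : ℤ) * n + n by ring, this]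
    ring

lemma card_coprime_shift (n k : ℕ) (c : ℤ) :
    ((Finset.Icc (1 : ℤ) ((k : ℤ) * n)).filter (fun m => Int.gcd (m + c) n = 1)).card
      = k * Nat.totient n := by
  rw [← card_coprime_Ico_mul n k (1 + c)]
  apply Finset.card_nbij' (fun m => m + c) (fun r => r - c)
  · intro a ha
    simp only [Finset.mem_coe, Finset.mem_filter, Finset.mem_Icc, Finset.mem_Ico] at ha ⊢
    exact ⟨by constructor <;> linarith [ha.1.1, ha.1.2], ha.2⟩
  · intro b hb
    simp only [Finset.mem_coe, Finset.mem_filter, Finset.mem_Icc, Finset.mem_Ico] at hb ⊢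
    refine ⟨by constructor <;> linarith [hb.1.1, hb.1.2], by rw [sub_add_cancel]; exact hb.2⟩
  · intro a _; ring
  · intro b _; ring

lemma F_eq_sum (n : ℕ) (c : ℤ) (h : ℕ) :
    (F n c h : ℝ) = ∑ a ∈ Finset.Ico (0 : ℤ) (h : ℤ),
      (if Int.gcd (c + a) n = 1 then (1 : ℝ) else 0) := by
  rw [F, Finset.card_filter,
    show Finset.Ico c (c + (h : ℤ)) = (Finset.Ico (0 : ℤ) (h : ℤ)).map (addLeftEmbedding c) from by
      rw [map_add_left_Ico]; ring_nf,
    Finset.sum_map]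
  push_cast
  simp [addLeftEmbedding]
  exact (Finset.natCast_card_filter _ _).symm

lemma sum_F (n k h : ℕ) (t : ℤ) :
    ∑ m ∈ Finset.Icc (1 : ℤ) ((k : ℤ) * (n : ℤ)), (F n (m + t) h : ℝ)
      = (k : ℝ) * h * Nat.totient n := by
  simp_rw [F_eq_sum]
  rw [Finset.sum_comm]
  have key : ∀ a ∈ Finset.Ico (0 : ℤ) (h : ℤ),
      (∑ m ∈ Finset.Icc (1 : ℤ) ((k : ℤ) * (n : ℤ)),
        (if Int.gcd (m + t + a) n = 1 then (1 : ℝ) else 0)) = ((k * Nat.totient n : ℕ) : ℝ) := by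
    intro a _
    simp_rw [add_assoc]
    rw [Finset.sum_boole]
    rw [card_coprime_shift n k (t + a)]
  rw [Finset.sum_congr rfl key, Finset.sum_const, Int.card_Ico]
  push_cast
  simp
  ring

lemma F_le (n : ℕ) (m : ℤ) (h : ℕ) : F n m h ≤ h := by
  refine le_trans (Finset.card_filter_le _ _) ?_
  rw [Int.card_Ico]
  simp

lemma abs_G_le (n₁ n₂ h₁ h₂ : ℕ) (hn₁ : 0 < n₁) (hn₂ : 0 < n₂) (q : ℤ) :
    |G n₁ n₂ h₁ h₂ q| ≤ 2 * h₁ * h₂ * (Nat.totient n₂ : ℝ) / n₂ := by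
  have hn₁R : (0 : ℝ) < n₁ := by exact_mod_cast hn₁
  have hn₂R : (0 : ℝ) < n₂ := by exact_mod_cast hn₂
  set c₂ : ℝ := (h₂ : ℝ) * (Nat.totient n₂) / n₂ with hc₂def
  have hc₂ : 0 ≤ c₂ := by positivity
  have hA : ∀ m : ℤ, |(F n₁ m h₁ : ℝ) - (h₁ : ℝ) * (Nat.totient n₁) / n₁| ≤ (h₁ : ℝ) := by
    intro m
    have hF0 : (0 : ℝ) ≤ (F n₁ m h₁ : ℝ) := by positivity
    have hFh : (F n₁ m h₁ : ℝ) ≤ (h₁ : ℝ) := by exact_mod_cast F_le n₁ m h₁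
    have hc0 : (0 : ℝ) ≤ (h₁ : ℝ) * (Nat.totient n₁) / n₁ := by positivity
    have hch : (h₁ : ℝ) * (Nat.totient n₁) / n₁ ≤ (h₁ : ℝ) := by
      rw [div_le_iff₀ hn₁R]
      have : (Nat.totient n₁ : ℝ) ≤ (n₁ : ℝ) := by exact_mod_cast Nat.totient_le n₁
      nlinarith [Nat.cast_nonneg (α := ℝ) h₁]
    rw [abs_le]
    constructor <;> linarith
  have hB : ∀ m : ℤ, |(F n₂ (m + q) h₂ : ℝ) - c₂| ≤ (F n₂ (m + q) h₂ : ℝ) + c₂ := by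
    intro m
    refine (abs_sub _ _).trans ?_
    rw [abs_of_nonneg (by positivity), abs_of_nonneg hc₂]
  have hsum : ∑ m ∈ Finset.Icc (1 : ℤ) ((n₁ : ℤ) * n₂), (F n₂ (m + q) h₂ : ℝ)
      = (n₁ : ℝ) * h₂ * Nat.totient n₂ := sum_F n₂ n₁ h₂ q
  have hcard : (Finset.Icc (1 : ℤ) ((n₁ : ℤ) * n₂)).card = n₁ * n₂ := by
    have h : ((n₁ : ℤ) * n₂ + 1 - 1) = ((n₁ * n₂ : ℕ) : ℤ) := by push_cast; ring
    rw [Int.card_Icc, h, Int.toNat_natCast]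
  have hSbound : |∑ m ∈ Finset.Icc (1 : ℤ) ((n₁ : ℤ) * n₂),
      ((F n₁ m h₁ : ℝ) - (h₁ : ℝ) * (Nat.totient n₁) / n₁) *
        ((F n₂ (m + q) h₂ : ℝ) - c₂)|
      ≤ (h₁ : ℝ) * ((n₁ : ℝ) * h₂ * Nat.totient n₂ + (n₁ * n₂ : ℝ) * c₂) := by
    refine (Finset.abs_sum_le_sum_abs _ _).trans ?_
    have : ∀ m ∈ Finset.Icc (1 : ℤ) ((n₁ : ℤ) * n₂),
        |((F n₁ m h₁ : ℝ) - (h₁ : ℝ) * (Nat.totient n₁) / n₁) *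
          ((F n₂ (m + q) h₂ : ℝ) - c₂)|
          ≤ (h₁ : ℝ) * ((F n₂ (m + q) h₂ : ℝ) + c₂) := by
      intro m _
      rw [abs_mul]
      exact mul_le_mul (hA m) (hB m) (abs_nonneg _) (Nat.cast_nonneg _)
    refine (Finset.sum_le_sum this).trans ?_
    rw [← Finset.mul_sum, Finset.sum_add_distrib, hsum, Finset.sum_const, hcard]
    push_cast
    ring_nf
    exact le_refl _
  have hG : |G n₁ n₂ h₁ h₂ q| ≤ (1 / ((n₁ : ℝ) * n₂)) *
      ((h₁ : ℝ) * ((n₁ : ℝ) * h₂ * Nat.totient n₂ + (n₁ * n₂ : ℝ) * c₂)) := by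
    rw [G, abs_mul, abs_of_nonneg (by positivity : (0:ℝ) ≤ 1 / ((n₁ : ℝ) * n₂))]
    exact mul_le_mul_of_nonneg_left hSbound (by positivity)
  refine hG.trans (le_of_eq ?_)
  rw [hc₂def]
  field_simp
  ring

/-- The primorial `p_k# = p_1 ⋯ p_k`, the product of the first `k` primes. -/
noncomputable def primorialK (k : ℕ) : ℕ := ∏ j ∈ Finset.range k, Nat.nth Nat.Prime j

lemma primorialK_pos (j : ℕ) : 0 < primorialK j :=
  Finset.prod_pos fun k _ => (Nat.prime_nth_prime k).pos

lemma totient_primorialK_ratio (j : ℕ) :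
    ((primorialK j).totient : ℝ) / primorialK j
      = ∏ k ∈ Finset.range j, (1 - 1 / (Nat.nth Nat.Prime k : ℝ)) := by
  induction j with
  | zero => simp [primorialK]
  | succ j ih =>
    have hp := Nat.prime_nth_prime j
    have hcop : Nat.Coprime (primorialK j) (Nat.nth Nat.Prime j) := by
      apply Nat.Coprime.prod_left
      intro k hk
      exact (Nat.coprime_primes (Nat.prime_nth_prime k) hp).2
        (ne_of_lt ((Nat.nth_lt_nth Nat.infinite_setOf_prime).2 (Finset.mem_range.1 hk)))
    have hP : primorialK (j + 1) = primorialK j * Nat.nth Nat.Prime j :=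
      Finset.prod_range_succ _ _
    rw [Finset.prod_range_succ, ← ih, hP, Nat.totient_mul hcop, Nat.totient_prime hp]
    have hppos : (0 : ℝ) < (Nat.nth Nat.Prime j : ℝ) := by exact_mod_cast hp.pos
    have hPpos : (0 : ℝ) < (primorialK j : ℝ) := by exact_mod_cast primorialK_pos j
    rw [Nat.cast_mul, Nat.cast_mul, Nat.cast_sub hp.pos]
    field_simp
    simp

lemma tendsto_totient_primorialK_ratio :
    Tendsto (fun j => ((primorialK j).totient : ℝ) / primorialK j) atTop (nhds 0) := by
  have hnotsum : ¬ Summable (fun k : ℕ => 1 / (Nat.nth Nat.Prime k : ℝ)) := by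
    intro hs
    apply Nat.Primes.not_summable_one_div
    exact (Equiv.summable_iff (Equiv.ofBijective
        (fun k => (⟨Nat.nth Nat.Prime k, Nat.prime_nth_prime k⟩ : Nat.Primes))
        ⟨fun a b hab => Nat.nth_injective Nat.infinite_setOf_prime (congrArg Subtype.val hab),
         fun p => ⟨Nat.count Nat.Prime p, Subtype.ext (Nat.nth_count p.2)⟩⟩)).mp hs
  have hS : Tendsto (fun j => ∑ k ∈ Finset.range j, 1 / (Nat.nth Nat.Prime k : ℝ)) atTop atTop :=
    (not_summable_iff_tendsto_nat_atTop_of_nonneg (fun k => by positivity)).1 hnotsum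
  have hterm : ∀ k : ℕ, (0 : ℝ) ≤ 1 - 1 / (Nat.nth Nat.Prime k : ℝ) := by
    intro k
    have h2 : (2 : ℝ) ≤ (Nat.nth Nat.Prime k : ℝ) := by exact_mod_cast (Nat.prime_nth_prime k).two_le
    have : 1 / (Nat.nth Nat.Prime k : ℝ) ≤ 1 := by
      rw [div_le_one (by linarith)]; linarith
    linarith
  apply squeeze_zero
    (g := fun j => Real.exp (-(∑ k ∈ Finset.range j, 1 / (Nat.nth Nat.Prime k : ℝ))))
  · intro j
    rw [totient_primorialK_ratio]
    exact Finset.prod_nonneg fun k _ => hterm k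
  · intro j
    rw [totient_primorialK_ratio]
    have hexp : Real.exp (-(∑ k ∈ Finset.range j, 1 / (Nat.nth Nat.Prime k : ℝ)))
        = ∏ k ∈ Finset.range j, Real.exp (-(1 / (Nat.nth Nat.Prime k : ℝ))) := by
      rw [← Real.exp_sum]
      congr 1
      rw [Finset.sum_neg_distrib]
    rw [hexp]
    refine Finset.prod_le_prod (fun k _ => hterm k) (fun k _ => ?_)
    have := Real.add_one_le_exp (-(1 / (Nat.nth Nat.Prime k : ℝ)))
    linarith
  · exact Real.tendsto_exp_atBot.comp (tendsto_neg_atTop_atBot.comp hS)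

/-- For fixed `i ≥ 1`, interval lengths `h₁, h₂ ≥ 0`, and shift `q ≥ 0`,
the covariance `G(p_i#, p_j#, h₁, h₂, q)` tends to `0` as `j → ∞`. -/
theorem G_primorial_tendsto_zero (i : ℕ) (hi : 1 ≤ i) (h₁ h₂ : ℕ) (q : ℤ) (hq : 0 ≤ q) :
    Tendsto (fun j : ℕ => G (primorialK i) (primorialK j) h₁ h₂ q)
      atTop (nhds 0) := by
  have hb : Tendsto (fun j : ℕ =>
      2 * (h₁ : ℝ) * h₂ * (((primorialK j).totient : ℝ) / primorialK j)) atTop (nhds 0) := by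
    simpa using tendsto_totient_primorialK_ratio.const_mul (2 * (h₁ : ℝ) * h₂)
  refine squeeze_zero_norm (fun j => ?_) hb
  rw [Real.norm_eq_abs]
  have := abs_G_le (primorialK i) (primorialK j) h₁ h₂ (primorialK_pos i) (primorialK_pos j) q
  calc |G (primorialK i) (primorialK j) h₁ h₂ q|
      ≤ 2 * h₁ * h₂ * ((primorialK j).totient : ℝ) / primorialK j := this
    _ = 2 * (h₁ : ℝ) * h₂ * (((primorialK j).totient : ℝ) / primorialK j) := by ring
end

section
/- Assume Cramér's conjecture in the form: there exists a constant C > 0 such that p_{k+1} - p_k ≤ C (log p_k)^2 for all k ≥ 1. Then log(p_{k+1}^2 / l_k) ~ (1/2) log(p_{k+1}^2) as k → ∞; that is, lim_{k→∞} log(p_{k+1}^2 / l_k) / ((1/2) log(p_{k+1}^2)) = 1. -/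
open Filter

/-- Assuming Cramér's conjecture (there exists `C > 0` with
`p_{k+1} - p_k ≤ C (log p_k)²` for all `k ≥ 1`), with `p_k = Nat.nth Nat.Prime (k-1)`
and `l_k = p_{k+1}^2 - p_k^2`, one has
`log(p_{k+1}^2 / l_k) ~ (1/2) log(p_{k+1}^2)` as `k → ∞`. -/
theorem log_ratio_asymp
    (hCramer : ∃ C : ℝ, 0 < C ∧ ∀ k : ℕ, 1 ≤ k →
      (Nat.nth Nat.Prime k : ℝ) - (Nat.nth Nat.Prime (k - 1) : ℝ) ≤
        C * (Real.log (Nat.nth Nat.Prime (k - 1) : ℝ)) ^ 2) :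
    Tendsto (fun k : ℕ =>
        Real.log ((Nat.nth Nat.Prime k : ℝ) ^ 2 /
            ((Nat.nth Nat.Prime k : ℝ) ^ 2 - (Nat.nth Nat.Prime (k - 1) : ℝ) ^ 2)) /
          ((1 / 2) * Real.log ((Nat.nth Nat.Prime k : ℝ) ^ 2)))
      atTop (nhds 1) := by
  obtain ⟨C, hC, hCr⟩ := hCramer
  have hinf : {n | Nat.Prime n}.Infinite := Nat.infinite_setOf_prime
  have hmono : StrictMono (Nat.nth Nat.Prime) := Nat.nth_strictMono hinf
  set p : ℕ → ℝ := fun k => (Nat.nth Nat.Prime k : ℝ) with hpdef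
  have hp2 : ∀ k, 2 ≤ p k := fun k => by
    have := (Nat.prime_nth_prime k).two_le
    simp only [hpdef]
    exact_mod_cast this
  have hppos : ∀ k, 0 < p k := fun k => lt_of_lt_of_le two_pos (hp2 k)
  have hlogpos : ∀ k, 0 < Real.log (p k) := fun k =>
    Real.log_pos (lt_of_lt_of_le one_lt_two (hp2 k))
  have hptop : Tendsto p atTop atTop := by
    apply tendsto_natCast_atTop_atTop.comp
    exact hmono.tendsto_atTop
  have hlogtop : Tendsto (fun k => Real.log (p k)) atTop atTop :=
    Real.tendsto_log_atTop.comp hptop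
  -- succ gap
  have hsucc : ∀ k, 1 ≤ k → p (k - 1) + 1 ≤ p k := by
    intro k hk
    have h := hmono (show k - 1 < k by omega)
    have h2 : Nat.nth Nat.Prime (k - 1) + 1 ≤ Nat.nth Nat.Prime k := h
    simp only [hpdef]
    exact_mod_cast h2
  set l : ℕ → ℝ := fun k => p k ^ 2 - p (k - 1) ^ 2 with hldef
  have hlge : ∀ k, 1 ≤ k → p k ≤ l k := by
    intro k hk
    have h1 : p (k - 1) + 1 ≤ p k := hsucc k hk
    have h2 : 0 < p (k - 1) := hppos _
    have hlk : l k = p k ^ 2 - p (k - 1) ^ 2 := rfl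
    nlinarith [hppos k]
  have hlpos : ∀ k, 1 ≤ k → 0 < l k := fun k hk => lt_of_lt_of_le (hppos k) (hlge k hk)
  -- upper bound on l
  have hlub : ∀ k, 1 ≤ k → l k ≤ 2 * C * p k * Real.log (p k) ^ 2 := by
    intro k hk
    have hq : p (k - 1) ≤ p k := by linarith [hsucc k hk]
    have hlogq : 0 ≤ Real.log (p (k - 1)) := Real.log_nonneg (by linarith [hp2 (k-1)])
    have hlogle : Real.log (p (k - 1)) ≤ Real.log (p k) :=
      Real.log_le_log (hppos _) hq
    have hgap : p k - p (k - 1) ≤ C * Real.log (p (k - 1)) ^ 2 := hCr k hk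
    have hlk : l k = p k ^ 2 - p (k - 1) ^ 2 := rfl
    have h1 : (p k - p (k - 1)) * (p k + p (k - 1)) ≤
        (C * Real.log (p (k - 1)) ^ 2) * (2 * p k) := by
      apply mul_le_mul hgap (by linarith) (by linarith [hppos k, hppos (k-1)])
      positivity
    have h2 : Real.log (p (k - 1)) ^ 2 ≤ Real.log (p k) ^ 2 := by
      nlinarith
    have hfac : l k = (p k - p (k - 1)) * (p k + p (k - 1)) := by rw [hlk]; ring
    rw [hfac]
    calc (p k - p (k - 1)) * (p k + p (k - 1))
        ≤ C * Real.log (p (k - 1)) ^ 2 * (2 * p k) := h1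
      _ ≤ C * Real.log (p k) ^ 2 * (2 * p k) :=
          mul_le_mul_of_nonneg_right (mul_le_mul_of_nonneg_left h2 hC.le)
            (by positivity)
      _ = 2 * C * p k * Real.log (p k) ^ 2 := by ring
  -- ratio log l / log p tends to 1
  have hratio : Tendsto (fun k => Real.log (l k) / Real.log (p k)) atTop (nhds 1) := by
    have hlb : ∀ᶠ k in atTop, (1:ℝ) ≤ Real.log (l k) / Real.log (p k) := by
      filter_upwards [eventually_ge_atTop 1] with k hk
      rw [le_div_iff₀ (hlogpos k), one_mul]
      exact Real.log_le_log (hppos k) (hlge k hk)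
    have hub : ∀ᶠ k in atTop, Real.log (l k) / Real.log (p k) ≤
        1 + (Real.log (2 * C) + 2 * Real.log (Real.log (p k))) / Real.log (p k) := by
      filter_upwards [eventually_ge_atTop 1] with k hk
      have h1 : Real.log (l k) ≤ Real.log (2 * C * p k * Real.log (p k) ^ 2) :=
        Real.log_le_log (hlpos k hk) (hlub k hk)
      have hne1 : (2 * C : ℝ) ≠ 0 := by positivity
      have hne2 : p k ≠ 0 := ne_of_gt (hppos k)
      have hne3 : Real.log (p k) ^ 2 ≠ 0 := pow_ne_zero _ (ne_of_gt (hlogpos k))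
      have h2 : Real.log (2 * C * p k * Real.log (p k) ^ 2) =
          Real.log (2 * C) + Real.log (p k) + 2 * Real.log (Real.log (p k)) := by
        rw [Real.log_mul (by positivity) hne3, Real.log_mul hne1 hne2, Real.log_pow]
        push_cast; ring
      rw [div_le_iff₀ (hlogpos k)]
      have h3 := h1.trans_eq h2
      have h4 : (1 + (Real.log (2 * C) + 2 * Real.log (Real.log (p k))) / Real.log (p k)) *
          Real.log (p k) = Real.log (p k) + (Real.log (2 * C) + 2 * Real.log (Real.log (p k))) := by
        rw [add_mul, one_mul, div_mul_cancel₀ _ (ne_of_gt (hlogpos k))]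
      rw [h4]; linarith
    have hzero : Tendsto (fun k => (Real.log (2 * C) + 2 * Real.log (Real.log (p k))) /
        Real.log (p k)) atTop (nhds 0) := by
      have ha : Tendsto (fun k => Real.log (2 * C) / Real.log (p k)) atTop (nhds 0) :=
        tendsto_const_nhds.div_atTop hlogtop
      have hb : Tendsto (fun k => Real.log (Real.log (p k)) / Real.log (p k)) atTop (nhds 0) := by
        exact (Real.isLittleO_log_id_atTop.tendsto_div_nhds_zero).comp hlogtop
      have := ha.add ((hb.const_mul 2))
      simpa [add_div, mul_div_assoc] using this
    have hupper : Tendsto (fun k => 1 + (Real.log (2 * C) + 2 * Real.log (Real.log (p k))) /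
        Real.log (p k)) atTop (nhds 1) := by
      simpa using (tendsto_const_nhds.add hzero)
    exact tendsto_of_tendsto_of_tendsto_of_le_of_le' tendsto_const_nhds hupper hlb hub
  -- rewrite expression
  have heq : ∀ᶠ k in atTop, (2 : ℝ) - Real.log (l k) / Real.log (p k) =
      Real.log (p k ^ 2 / (p k ^ 2 - p (k - 1) ^ 2)) / ((1 / 2) * Real.log (p k ^ 2)) := by
    filter_upwards [eventually_ge_atTop 1] with k hk
    have hlne : l k ≠ 0 := ne_of_gt (hlpos k hk)
    have hpne : p k ^ 2 ≠ 0 := pow_ne_zero _ (ne_of_gt (hppos k))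
    have hlog2 : Real.log (p k ^ 2) = 2 * Real.log (p k) := by
      rw [Real.log_pow]; push_cast; ring
    rw [Real.log_div hpne hlne, hlog2]
    have hlogne : Real.log (p k) ≠ 0 := ne_of_gt (hlogpos k)
    field_simp
  have hfinal : Tendsto (fun k => (2:ℝ) - Real.log (l k) / Real.log (p k)) atTop
      (nhds (2 - 1)) := tendsto_const_nhds.sub hratio
  rw [show (2:ℝ) - 1 = 1 by norm_num] at hfinal
  exact Tendsto.congr' heq hfinal
end

section
/- Assume Cramér's conjecture in the form: there exists a constant C > 0 such that p_{k+1} - p_k ≤ C (log p_k)^2 for all k ≥ 1. Then Σ_{j=1}^{k} l_j · log(p_{j+1}^2 / l_j) / (log p_{j+1}^2)^2 ~ (1/2) li(p_{k+1}^2) as k → ∞; that is, the ratio of the two sides tends to 1. -/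
open Filter

/-- `li(x) := ∫_2^x dt / log t`. -/
noncomputable def li (x : ℝ) : ℝ := ∫ t in (2:ℝ)..x, 1 / Real.log t

namespace Cramer18

noncomputable def P (j : ℕ) : ℝ := (Nat.nth Nat.Prime j : ℝ)

lemma two_le_P (j : ℕ) : 2 ≤ P j := by
  have h := Nat.add_two_le_nth_prime j
  have h2 : (2:ℕ) ≤ Nat.nth Nat.Prime j := by omega
  unfold P; exact_mod_cast h2

lemma P_succ (j : ℕ) : P j + 1 ≤ P (j + 1) := by
  have h : Nat.nth Nat.Prime j < Nat.nth Nat.Prime (j+1) :=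
    (Nat.nth_lt_nth Nat.infinite_setOf_prime).2 (Nat.lt_succ_self j)
  have h2 : Nat.nth Nat.Prime j + 1 ≤ Nat.nth Nat.Prime (j+1) := h
  unfold P; exact_mod_cast h2

lemma three_le_Psucc (j : ℕ) : 3 ≤ P (j + 1) := by
  have h := Nat.add_two_le_nth_prime (j+1)
  have h2 : (3:ℕ) ≤ Nat.nth Nat.Prime (j+1) := by omega
  unfold P; exact_mod_cast h2

lemma one_lt_logQ (j : ℕ) : 1 < Real.log (P (j + 1)) := by
  have h3 := three_le_Psucc j
  rw [Real.lt_log_iff_exp_lt (by linarith)]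
  have := Real.exp_one_lt_d9
  linarith

lemma log_P_pos (j : ℕ) : 0 < Real.log (P j) :=
  Real.log_pos (by linarith [two_le_P j])

lemma tendsto_P : Tendsto P atTop atTop := by
  apply tendsto_atTop_mono (f := fun j : ℕ => (j:ℝ)) ?_ tendsto_natCast_atTop_atTop
  intro j
  have h := Nat.add_two_le_nth_prime j
  have h2 : j ≤ Nat.nth Nat.Prime j := by omega
  simp only [P]; exact_mod_cast h2


lemma intOn {a b : ℝ} (ha : 2 ≤ a) (hb : 2 ≤ b) :
    IntervalIntegrable (fun t => 1 / Real.log t) MeasureTheory.volume a b := by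
  apply ContinuousOn.intervalIntegrable
  have hsub : ∀ t ∈ Set.uIcc a b, (2:ℝ) ≤ t := by
    intro t ht
    rcases Set.mem_uIcc.1 ht with ⟨h1, _⟩ | ⟨h1, _⟩ <;> linarith
  apply ContinuousOn.div continuousOn_const
  · exact Real.continuousOn_log.mono (fun t ht => by
      have := hsub t ht
      simp only [Set.mem_compl_iff, Set.mem_singleton_iff]
      intro h; rw [h] at this; linarith)
  · intro t ht
    exact ne_of_gt (Real.log_pos (by linarith [hsub t ht]))

lemma li_sub {a b : ℝ} (ha : 2 ≤ a) (hab : a ≤ b) :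
    li b - li a = ∫ t in a..b, 1 / Real.log t := by
  unfold li
  rw [← intervalIntegral.integral_add_adjacent_intervals (intOn le_rfl ha)
    (intOn ha (ha.trans hab))]
  ring

lemma int_le {a b : ℝ} (ha : 2 ≤ a) (hab : a ≤ b) :
    (∫ t in a..b, 1 / Real.log t) ≤ (b - a) / Real.log a := by
  have h1 : (∫ t in a..b, 1 / Real.log t) ≤ ∫ _t in a..b, 1 / Real.log a := by
    apply intervalIntegral.integral_mono_on hab (intOn ha (ha.trans hab))
      intervalIntegrable_const
    intro t ht
    have h2t : a ≤ t := ht.1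
    have hla : 0 < Real.log a := Real.log_pos (by linarith)
    have hlt : Real.log a ≤ Real.log t := Real.log_le_log (by linarith) h2t
    gcongr
  rw [intervalIntegral.integral_const, smul_eq_mul, mul_one_div] at h1
  exact h1

lemma le_int {a b : ℝ} (ha : 2 ≤ a) (hab : a ≤ b) :
    (b - a) / Real.log b ≤ ∫ t in a..b, 1 / Real.log t := by
  have h1 : (∫ _t in a..b, 1 / Real.log b) ≤ ∫ t in a..b, 1 / Real.log t := by
    apply intervalIntegral.integral_mono_on hab intervalIntegrable_const
      (intOn ha (ha.trans hab))
    intro t ht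
    have h2t : a ≤ t := ht.1
    have hlt : 0 < Real.log t := Real.log_pos (by linarith)
    have hlb : Real.log t ≤ Real.log b := Real.log_le_log (by linarith) ht.2
    gcongr
  rw [intervalIntegral.integral_const, smul_eq_mul, mul_one_div] at h1
  exact h1


noncomputable def lf (j : ℕ) : ℝ := P (j+1)^2 - P j^2
noncomputable def termf (j : ℕ) : ℝ :=
  lf j * Real.log (P (j+1)^2 / lf j) / (Real.log (P (j+1)^2))^2
noncomputable def gf (j : ℕ) : ℝ := (1/2) * (li (P (j+1)^2) - li (P j^2))

lemma lf_pos (j : ℕ) : 0 < lf j := by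
  have h1 := two_le_P j; have h2 := P_succ j
  unfold lf; nlinarith

lemma Q_le_lf (j : ℕ) : P (j+1) ≤ lf j := by
  have h1 := two_le_P j; have h2 := P_succ j
  unfold lf; nlinarith

lemma lf_lt_sq (j : ℕ) : lf j ≤ P (j+1)^2 := by
  have h1 := two_le_P j
  unfold lf; nlinarith

lemma gf_bounds (j : ℕ) :
    lf j / (4 * Real.log (P (j+1))) ≤ gf j ∧ gf j ≤ lf j / (4 * Real.log (P j)) := by
  have hp := two_le_P j
  have hq := P_succ j
  have ha : (2:ℝ) ≤ P j ^ 2 := by nlinarith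
  have hab : P j ^ 2 ≤ P (j+1) ^ 2 := by nlinarith
  have hd := li_sub ha hab
  have h1 := le_int ha hab
  have h2 := int_le ha hab
  rw [Real.log_pow] at h1 h2
  push_cast at h1 h2
  constructor
  · have e1 : lf j / (4 * Real.log (P (j+1)))
        = (1/2) * ((P (j+1)^2 - P j^2) / (2 * Real.log (P (j+1)))) := by
      unfold lf; ring
    rw [e1]
    unfold gf
    rw [hd]
    linarith
  · have e2 : lf j / (4 * Real.log (P j))
        = (1/2) * ((P (j+1)^2 - P j^2) / (2 * Real.log (P j))) := by
      unfold lf; ring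
    rw [e2]
    unfold gf
    rw [hd]
    linarith

lemma gf_pos (j : ℕ) : 0 < gf j := by
  refine lt_of_lt_of_le ?_ (gf_bounds j).1
  have := lf_pos j
  have := log_P_pos (j+1)
  positivity

lemma termf_eq (j : ℕ) : termf j
    = lf j * Real.log (P (j+1)^2 / lf j) / (4 * (Real.log (P (j+1)))^2) := by
  unfold termf
  rw [Real.log_pow]
  push_cast
  ring_nf

lemma log_ratio_nonneg (j : ℕ) : 0 ≤ Real.log (P (j+1)^2 / lf j) := by
  apply Real.log_nonneg
  rw [le_div_iff₀ (lf_pos j)]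
  simpa using lf_lt_sq j

lemma termf_nonneg (j : ℕ) : 0 ≤ termf j := by
  rw [termf_eq]
  have h1 := (lf_pos j).le
  have h2 := log_ratio_nonneg j
  have h3 := log_P_pos (j+1)
  positivity

lemma R_le (j : ℕ) : termf j / gf j
    ≤ Real.log (P (j+1)^2 / lf j) / Real.log (P (j+1)) := by
  have hlb : 0 < lf j / (4 * Real.log (P (j+1))) := by
    have := lf_pos j; have := log_P_pos (j+1); positivity
  have h1 : termf j / gf j ≤ termf j / (lf j / (4 * Real.log (P (j+1)))) := by
    gcongr
    · exact termf_nonneg j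
    · exact (gf_bounds j).1
  refine h1.trans_eq ?_
  rw [termf_eq]
  have h2 := (lf_pos j).ne'
  have h3 := (log_P_pos (j+1)).ne'
  field_simp

lemma R_ge (j : ℕ) :
    Real.log (P (j+1)^2 / lf j) / Real.log (P (j+1)) * (Real.log (P j) / Real.log (P (j+1)))
      ≤ termf j / gf j := by
  have hub : 0 < lf j / (4 * Real.log (P j)) := by
    have := lf_pos j; have := log_P_pos j; positivity
  have h1 : termf j / (lf j / (4 * Real.log (P j))) ≤ termf j / gf j := by
    gcongr
    · exact termf_nonneg j
    · exact gf_pos j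
    · exact (gf_bounds j).2
  refine le_trans (le_of_eq ?_) h1
  rw [termf_eq]
  have h2 := (lf_pos j).ne'
  have h3 := (log_P_pos (j+1)).ne'
  have h4 := (log_P_pos j).ne'
  field_simp


lemma tendsto_logP : Tendsto (fun j => Real.log (P j)) atTop atTop :=
  Real.tendsto_log_atTop.comp tendsto_P

lemma tendsto_logQ : Tendsto (fun j => Real.log (P (j+1))) atTop atTop :=
  tendsto_logP.comp (tendsto_add_atTop_nat 1)

lemma aux0 : Tendsto (fun x : ℝ => Real.log x / x) atTop (nhds 0) := by
  simpa using Real.tendsto_pow_log_div_mul_add_atTop 1 0 1 one_ne_zero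

lemma aux1 : Tendsto (fun j => Real.log (Real.log (P (j+1))) / Real.log (P (j+1)))
    atTop (nhds 0) := aux0.comp tendsto_logQ

-- T1
lemma T1 {C : ℝ} (hC : 0 < C)
    (hCr : ∀ j : ℕ, P (j+1) - P j ≤ C * (Real.log (P j))^2) :
    Tendsto (fun j => Real.log (lf j) / Real.log (P (j+1))) atTop (nhds 1) := by
  apply tendsto_of_tendsto_of_tendsto_of_le_of_le' (g := fun _ : ℕ => (1:ℝ))
    (h := fun j => 1 + Real.log (2*C) / Real.log (P (j+1))
      + 2 * (Real.log (Real.log (P (j+1))) / Real.log (P (j+1))))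
  · exact tendsto_const_nhds
  · have ht : Tendsto (fun j => 1 + Real.log (2*C) / Real.log (P (j+1))
        + 2 * (Real.log (Real.log (P (j+1))) / Real.log (P (j+1)))) atTop
        (nhds (1 + 0 + 2 * 0)) :=
      (tendsto_const_nhds.add (Tendsto.div_atTop tendsto_const_nhds tendsto_logQ)).add
        (aux1.const_mul 2)
    simpa using ht
  · filter_upwards with j
    have hQ : (0:ℝ) < P (j+1) := by linarith [two_le_P (j+1)]
    have h1 : Real.log (P (j+1)) ≤ Real.log (lf j) := Real.log_le_log hQ (Q_le_lf j)
    rw [le_div_iff₀ (by linarith [one_lt_logQ j])]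
    linarith
  · filter_upwards with j
    set L := Real.log (P (j+1)) with hL
    have hL1 : 1 < L := one_lt_logQ j
    have hp := two_le_P j
    have hq := P_succ j
    have hlogpq : Real.log (P j) ≤ L := Real.log_le_log (by linarith) (by linarith)
    have hlogp := log_P_pos j
    have hbd : lf j ≤ 2*C*L^2 * P (j+1) := by
      have hsq : (Real.log (P j))^2 ≤ L^2 := by nlinarith
      have h4 : C * (Real.log (P j))^2 ≤ C * L^2 := by nlinarith
      calc lf j = (P (j+1) - P j) * (P (j+1) + P j) := by unfold lf; ring
        _ ≤ (C * L^2) * (P (j+1) + P j) :=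
            mul_le_mul_of_nonneg_right ((hCr j).trans h4) (by linarith)
        _ ≤ (C * L^2) * (2 * P (j+1)) :=
            mul_le_mul_of_nonneg_left (by linarith) (by positivity)
        _ = 2*C*L^2 * P (j+1) := by ring
    have hlog : Real.log (lf j) ≤ Real.log (2*C) + 2 * Real.log L + L := by
      have h5 := Real.log_le_log (lf_pos j) hbd
      rw [Real.log_mul (by positivity) (by linarith), Real.log_mul (by positivity)
        (by positivity), Real.log_pow] at h5
      push_cast at h5
      linarith
    rw [div_le_iff₀ (by linarith)]
    have he : (1 + Real.log (2*C) / L + 2 * (Real.log L / L)) * L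
        = L + Real.log (2*C) + 2 * Real.log L := by
      field_simp
    rw [he]
    linarith

-- T2
lemma T2 {C : ℝ} (hC : 0 < C)
    (hCr : ∀ j : ℕ, P (j+1) - P j ≤ C * (Real.log (P j))^2) :
    Tendsto (fun j => Real.log (P j) / Real.log (P (j+1))) atTop (nhds 1) := by
  apply tendsto_of_tendsto_of_tendsto_of_le_of_le'
    (g := fun j => 1 - C * (Real.log (P j))^2 / P j) (h := fun _ : ℕ => (1:ℝ))
  · have h0 : Tendsto (fun x : ℝ => Real.log x ^ 2 / ((1/C) * x + 0)) atTop (nhds 0) :=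
      Real.tendsto_pow_log_div_mul_add_atTop (1/C) 0 2 (one_div_ne_zero hC.ne')
    have h1 : Tendsto (fun j => C * (Real.log (P j))^2 / P j) atTop (nhds 0) := by
      apply (h0.comp tendsto_P).congr
      intro j
      have hp : (0:ℝ) < P j := by linarith [two_le_P j]
      simp only [Function.comp]
      rw [add_zero]
      field_simp
    have h2 : Tendsto (fun j => 1 - C * (Real.log (P j))^2 / P j) atTop (nhds (1 - 0)) :=
      tendsto_const_nhds.sub h1
    simpa using h2
  · exact tendsto_const_nhds
  · filter_upwards with j
    have hp : (0:ℝ) < P j := by linarith [two_le_P j]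
    have hq : (0:ℝ) < P (j+1) := by linarith [P_succ j, two_le_P j]
    have hL1 : 1 < Real.log (P (j+1)) := one_lt_logQ j
    set d := C * (Real.log (P j))^2 with hdd
    have hd0 : 0 ≤ d := by positivity
    have hda : Real.log (P (j+1)) ≤ Real.log (P j) + d / P j := by
      have h1 : P (j+1) ≤ P j + d := by linarith [hCr j]
      have h2 : Real.log (P (j+1)) ≤ Real.log (P j + d) :=
        Real.log_le_log hq h1
      have h3 : Real.log ((P j + d) / P j) = Real.log (P j + d) - Real.log (P j) :=
        Real.log_div (by linarith) hp.ne'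
      have h4 : Real.log ((P j + d) / P j) ≤ (P j + d) / P j - 1 :=
        Real.log_le_sub_one_of_pos (by positivity)
      have h5 : (P j + d) / P j - 1 = d / P j := by field_simp; ring
      linarith
    rw [le_div_iff₀ (by linarith : (0:ℝ) < Real.log (P (j+1)))]
    have h6 : d / P j ≤ d / P j * Real.log (P (j+1)) := by
      nlinarith [div_nonneg hd0 hp.le]
    nlinarith
  · filter_upwards with j
    have hq : (0:ℝ) < P (j+1) := by linarith [P_succ j, two_le_P j]
    rw [div_le_one (by linarith [one_lt_logQ j])]
    exact Real.log_le_log (by linarith [two_le_P j]) (by linarith [P_succ j])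


lemma hi_eq (j : ℕ) : Real.log (P (j+1)^2 / lf j) / Real.log (P (j+1))
    = 2 - Real.log (lf j) / Real.log (P (j+1)) := by
  have hq : (0:ℝ) < P (j+1) := by linarith [two_le_P (j+1)]
  have hL : Real.log (P (j+1)) ≠ 0 := by linarith [one_lt_logQ j]
  rw [Real.log_div (by positivity) (lf_pos j).ne', Real.log_pow]
  push_cast
  field_simp

lemma tendsto_hi {C : ℝ} (hC : 0 < C)
    (hCr : ∀ j : ℕ, P (j+1) - P j ≤ C * (Real.log (P j))^2) :
    Tendsto (fun j => Real.log (P (j+1)^2 / lf j) / Real.log (P (j+1))) atTop (nhds 1) := by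
  have h1 : Tendsto (fun j => 2 - Real.log (lf j) / Real.log (P (j+1))) atTop
      (nhds (2 - 1)) := tendsto_const_nhds.sub (T1 hC hCr)
  norm_num at h1
  exact h1.congr (fun j => (hi_eq j).symm)

lemma tendsto_R {C : ℝ} (hC : 0 < C)
    (hCr : ∀ j : ℕ, P (j+1) - P j ≤ C * (Real.log (P j))^2) :
    Tendsto (fun j => termf j / gf j) atTop (nhds 1) := by
  apply tendsto_of_tendsto_of_tendsto_of_le_of_le'
    (g := fun j => Real.log (P (j+1)^2 / lf j) / Real.log (P (j+1))
      * (Real.log (P j) / Real.log (P (j+1))))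
    (h := fun j => Real.log (P (j+1)^2 / lf j) / Real.log (P (j+1)))
  · have := (tendsto_hi hC hCr).mul (T2 hC hCr)
    simpa using this
  · exact tendsto_hi hC hCr
  · filter_upwards with j; exact R_ge j
  · filter_upwards with j; exact R_le j

lemma littleo {C : ℝ} (hC : 0 < C)
    (hCr : ∀ j : ℕ, P (j+1) - P j ≤ C * (Real.log (P j))^2) :
    (fun j => termf j - gf j) =o[atTop] gf := by
  rw [Asymptotics.isLittleO_iff]
  intro c hc
  have h1 : ∀ᶠ j in atTop, dist (termf j / gf j) 1 < c :=
    (Metric.tendsto_nhds.mp (tendsto_R hC hCr)) c hc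
  filter_upwards [h1] with j hj
  have hg := gf_pos j
  have he : termf j - gf j = (termf j / gf j - 1) * gf j := by
    field_simp
  rw [he, Real.norm_eq_abs, Real.norm_eq_abs, abs_mul, abs_of_pos hg]
  rw [Real.dist_eq] at hj
  exact mul_le_mul_of_nonneg_right hj.le hg.le

lemma sum_gf (k : ℕ) : ∑ j ∈ Finset.range k, gf j
    = (1/2) * li (P k ^ 2) - (1/2) * li (P 0 ^ 2) := by
  have h := Finset.sum_range_sub (fun i => (1/2) * li (P i ^ 2)) k
  rw [← h]
  apply Finset.sum_congr rfl
  intro j _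
  unfold gf
  ring

lemma tendsto_xlog : Tendsto (fun x : ℝ => x / Real.log x) atTop atTop := by
  have haux : Tendsto (fun x : ℝ => Real.log x / x) atTop (nhds 0) := by
    simpa using Real.tendsto_pow_log_div_mul_add_atTop 1 0 1 one_ne_zero
  have h1 : Tendsto (fun x : ℝ => Real.log x / x) atTop (nhdsWithin 0 (Set.Ioi 0)) := by
    apply tendsto_nhdsWithin_of_tendsto_nhds_of_eventually_within _ haux
    filter_upwards [eventually_ge_atTop (2:ℝ)] with x hx
    have : 0 < Real.log x := Real.log_pos (by linarith)
    have : (0:ℝ) < x := by linarith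
    simp only [Set.mem_Ioi]
    positivity
  have h2 := h1.inv_tendsto_nhdsGT_zero
  refine h2.congr (fun x => ?_)
  simp [inv_div]

lemma tendsto_li : Tendsto (fun k => li (P k ^ 2)) atTop atTop := by
  have hy : Tendsto (fun k => P k ^ 2) atTop atTop :=
    (tendsto_pow_atTop (two_ne_zero)).comp tendsto_P
  have h2 : Tendsto (fun x : ℝ => (x - 4) / Real.log x) atTop atTop := by
    have hhalf : Tendsto (fun x : ℝ => (1/2) * (x / Real.log x)) atTop atTop :=
      tendsto_xlog.const_mul_atTop (by norm_num)
    apply tendsto_atTop_mono' atTop ?_ hhalf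
    filter_upwards [eventually_ge_atTop (8:ℝ)] with x hx
    have hl : 0 < Real.log x := Real.log_pos (by linarith)
    have he : (1/2) * (x / Real.log x) = (x/2) / Real.log x := by ring
    rw [he]
    gcongr <;> linarith
  have h3 : Tendsto (fun k => li 4 + ((P k ^ 2 - 4) / Real.log (P k ^ 2))) atTop atTop :=
    tendsto_atTop_add_const_left _ _ (h2.comp hy)
  apply tendsto_atTop_mono _ h3
  intro k
  have hp := two_le_P k
  have ha : (2:ℝ) ≤ 4 := by norm_num
  have hab : (4:ℝ) ≤ P k ^ 2 := by nlinarith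
  have hd := li_sub ha hab
  have h4 := le_int ha hab
  linarith

lemma tendsto_sum_gf : Tendsto (fun k => ∑ j ∈ Finset.range k, gf j) atTop atTop := by
  have h1 : Tendsto (fun k => (1/2) * li (P k ^ 2)) atTop atTop :=
    tendsto_li.const_mul_atTop (by norm_num)
  have h2 := tendsto_atTop_add_const_right atTop (-((1/2) * li (P 0 ^ 2))) h1
  apply h2.congr
  intro k
  rw [sum_gf k]
  ring


lemma main_aux {C : ℝ} (hC : 0 < C)
    (hCr : ∀ j : ℕ, P (j+1) - P j ≤ C * (Real.log (P j))^2) :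
    Tendsto (fun k => (∑ j ∈ Finset.range k, termf j) / ((1/2) * li (P k ^ 2)))
      atTop (nhds 1) := by
  have hlit : (fun k => ∑ j ∈ Finset.range k, (termf j - gf j))
      =o[atTop] (fun k => ∑ j ∈ Finset.range k, gf j) :=
    (littleo hC hCr).sum_range (fun j => (gf_pos j).le) tendsto_sum_gf
  have hquot : Tendsto (fun k => (∑ j ∈ Finset.range k, (termf j - gf j))
      / ∑ j ∈ Finset.range k, gf j) atTop (nhds 0) := hlit.tendsto_div_nhds_zero
  have hden : Tendsto (fun k => (∑ j ∈ Finset.range k, gf j) + (1/2) * li (P 0 ^ 2))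
      atTop atTop := tendsto_atTop_add_const_right _ _ tendsto_sum_gf
  have h3 : Tendsto (fun k => ((1/2) * li (P 0 ^ 2))
      / ((∑ j ∈ Finset.range k, gf j) + (1/2) * li (P 0 ^ 2))) atTop (nhds 0) :=
    Tendsto.div_atTop tendsto_const_nhds hden
  have h2 : Tendsto (fun k => (∑ j ∈ Finset.range k, gf j)
      / ((∑ j ∈ Finset.range k, gf j) + (1/2) * li (P 0 ^ 2))) atTop (nhds 1) := by
    have h4 : Tendsto (fun k => 1 - ((1/2) * li (P 0 ^ 2))
        / ((∑ j ∈ Finset.range k, gf j) + (1/2) * li (P 0 ^ 2))) atTop (nhds (1 - 0)) :=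
      tendsto_const_nhds.sub h3
    norm_num at h4
    apply h4.congr'
    filter_upwards [hden.eventually_ge_atTop 1] with k hk
    have hne : (∑ j ∈ Finset.range k, gf j) + (1/2) * li (P 0 ^ 2) ≠ 0 := by linarith
    have hne2 : (∑ j ∈ Finset.range k, gf j) * 2 + li (P 0 ^ 2) ≠ 0 := by
      intro h; apply hne; linarith
    field_simp
    rw [one_sub_div (by intro h; apply hne; linarith)]; ring
  have h5 : Tendsto (fun k =>
      (1 + (∑ j ∈ Finset.range k, (termf j - gf j)) / ∑ j ∈ Finset.range k, gf j)
        * ((∑ j ∈ Finset.range k, gf j)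
          / ((∑ j ∈ Finset.range k, gf j) + (1/2) * li (P 0 ^ 2))))
      atTop (nhds ((1 + 0) * 1)) := (tendsto_const_nhds.add hquot).mul h2
  norm_num at h5
  apply h5.congr'
  filter_upwards [tendsto_sum_gf.eventually_ge_atTop 1, hden.eventually_ge_atTop 1]
    with k hk1 hk2
  have hg0 : (∑ j ∈ Finset.range k, gf j) ≠ 0 := by linarith
  have hd0 : (∑ j ∈ Finset.range k, gf j) + (1/2) * li (P 0 ^ 2) ≠ 0 := by linarith
  have hsum : ∑ j ∈ Finset.range k, (termf j - gf j)
      = (∑ j ∈ Finset.range k, termf j) - ∑ j ∈ Finset.range k, gf j :=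
    Finset.sum_sub_distrib _ _
  have hden_eq : (1/2) * li (P k ^ 2)
      = (∑ j ∈ Finset.range k, gf j) + (1/2) * li (P 0 ^ 2) := by
    rw [sum_gf k]; ring
  rw [hden_eq]
  have e1 : 1 + ((∑ x ∈ Finset.range k, termf x) - ∑ x ∈ Finset.range k, gf x)
        / ∑ x ∈ Finset.range k, gf x
      = (∑ x ∈ Finset.range k, termf x) / ∑ x ∈ Finset.range k, gf x := by
    field_simp
    ring
  rw [e1, div_mul_div_comm, mul_comm (∑ x ∈ Finset.range k, gf x)
    ((∑ x ∈ Finset.range k, gf x) + 1 / 2 * li (P 0 ^ 2)),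
    mul_div_mul_right _ _ hg0]

end Cramer18

open Cramer18 in
/-- Assuming Cramér's conjecture (there exists `C > 0` with
`p_{k+1} - p_k ≤ C (log p_k)²` for all `k ≥ 1`), with `p_k = Nat.nth Nat.Prime (k-1)`
and `l_j = p_{j+1}^2 - p_j^2`, one has
`∑_{j=1}^k l_j log(p_{j+1}^2/l_j) / (log p_{j+1}^2)² ~ (1/2) li(p_{k+1}^2)` as `k → ∞`. -/
theorem variance_sum_asymp_half_li
    (hCramer : ∃ C : ℝ, 0 < C ∧ ∀ k : ℕ, 1 ≤ k →
      (Nat.nth Nat.Prime k : ℝ) - (Nat.nth Nat.Prime (k - 1) : ℝ) ≤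
        C * (Real.log (Nat.nth Nat.Prime (k - 1) : ℝ)) ^ 2) :
    Tendsto (fun k : ℕ =>
        (∑ j ∈ Finset.range k,
            (((Nat.nth Nat.Prime (j + 1) : ℝ) ^ 2 - (Nat.nth Nat.Prime j : ℝ) ^ 2) *
                Real.log ((Nat.nth Nat.Prime (j + 1) : ℝ) ^ 2 /
                  ((Nat.nth Nat.Prime (j + 1) : ℝ) ^ 2 - (Nat.nth Nat.Prime j : ℝ) ^ 2)) /
              (Real.log ((Nat.nth Nat.Prime (j + 1) : ℝ) ^ 2)) ^ 2)) /
          ((1 / 2) * li ((Nat.nth Nat.Prime k : ℝ) ^ 2)))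
      atTop (nhds 1) := by
  obtain ⟨C, hC, hCr⟩ := hCramer
  have hCr' : ∀ j : ℕ, P (j+1) - P j ≤ C * (Real.log (P j))^2 := by
    intro j
    have h := hCr (j+1) (Nat.le_add_left 1 j)
    simpa [P] using h
  exact (main_aux hC hCr').congr (fun k => rfl)
end
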